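/- Let R > 1, μ(x) = x²/2 − log(x), and f(ρ,R) = exp(μ(ρ)−μ(R)) / (ρ·√(1 − exp(2[μ(ρ)−μ(R)]))). Then for all ρ with 1 < ρ < R, f(ρ,R) < 1/√((R² − ρ²)(ρ² − 1)). -/

import Mathlib

open Real

/-- μ(x) = x²/2 − log x. -/
noncomputable def mu (x : ℝ) : ℝ := x ^ 2 / 2 - Real.log x

/-- f(ρ, R) = exp(μ(ρ)−μ(R)) / (ρ √(1 − exp(2(μ(ρ)−μ(R))))). -/
noncomputable def f (ρ R : ℝ) : ℝ :=
  Real.exp (mu ρ - mu R) / (ρ * Real.sqrt (1 - Real.exp (2 * (mu ρ - mu R))))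

theorem f_upper_bound (R ρ : ℝ) (hR : 1 < R) (hρ1 : 1 < ρ) (hρR : ρ < R) :
    f ρ R < 1 / Real.sqrt ((R ^ 2 - ρ ^ 2) * (ρ ^ 2 - 1)) := by
  have hρ0 : (0:ℝ) < ρ := lt_trans one_pos hρ1
  have hR0 : (0:ℝ) < R := lt_trans one_pos hR
  have hA : 0 < R ^ 2 - ρ ^ 2 := by nlinarith
  have hB : 0 < ρ ^ 2 - 1 := by nlinarith
  set A := R ^ 2 - ρ ^ 2 with hAdef
  set B := ρ ^ 2 - 1 with hBdef
  -- log bound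
  have hq : (0:ℝ) < R ^ 2 / ρ ^ 2 := by positivity
  have hqne : R ^ 2 / ρ ^ 2 ≠ 1 := by
    have : (1:ℝ) < R ^ 2 / ρ ^ 2 := by
      rw [lt_div_iff₀ (by positivity)]; nlinarith
    exact ne_of_gt this
  have hlog : Real.log (R ^ 2 / ρ ^ 2) < A / ρ ^ 2 := by
    have h := Real.log_lt_sub_one_of_pos hq hqne
    have heq : R ^ 2 / ρ ^ 2 - 1 = A / ρ ^ 2 := by
      field_simp; rw [hAdef]
    linarith [heq ▸ h]
  have hlogsplit : Real.log (R ^ 2 / ρ ^ 2) = 2 * Real.log R - 2 * Real.log ρ := by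
    rw [Real.log_div (by positivity) (by positivity), Real.log_pow, Real.log_pow]
    push_cast; ring
  -- c := 2(μ(R)−μ(ρ))
  set c := 2 * (mu R - mu ρ) with hcdef
  have hcval : c = A - Real.log (R ^ 2 / ρ ^ 2) := by
    rw [hcdef, hlogsplit, hAdef]; unfold mu; ring
  have hABc : A * B / ρ ^ 2 < c := by
    have heq : A * B / ρ ^ 2 = A - A / ρ ^ 2 := by
      field_simp [hBdef]; ring
    rw [hcval]; linarith [heq]
  have hcpos : 0 < c := lt_trans (by positivity) hABc
  -- key exponential inequality : c * exp (2x) < 1 - exp (2x) where 2x = -c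
  have h2x : 2 * (mu ρ - mu R) = -c := by rw [hcdef]; ring
  have hexp : c + 1 < Real.exp c := Real.add_one_lt_exp (ne_of_gt hcpos)
  have hee : Real.exp (-c) * Real.exp c = 1 := by rw [← Real.exp_add]; simp
  have hexpneg : (1 + c) * Real.exp (-c) < 1 := by
    nlinarith [Real.exp_pos (-c), Real.exp_pos c]
  have hkey : c * Real.exp (-c) < 1 - Real.exp (-c) := by nlinarith [Real.exp_pos (-c)]
  have hpos1 : 0 < 1 - Real.exp (-c) := by nlinarith [Real.exp_pos (-c), hcpos]
  -- sqrt comparison for the denominator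
  set x := mu ρ - mu R with hxdef
  have hexp2x : Real.exp (2 * x) = Real.exp (-c) := by rw [h2x]
  have hsq : Real.exp x * Real.sqrt c < Real.sqrt (1 - Real.exp (2 * x)) := by
    rw [hexp2x]
    have h2 : Real.sqrt (Real.exp (-c)) = Real.exp x := by
      rw [show -c = 2 * x from h2x.symm, show (2:ℝ) * x = x + x by ring, Real.exp_add,
        ← sq, Real.sqrt_sq (Real.exp_pos x).le]
    have h1 : Real.exp x * Real.sqrt c = Real.sqrt (c * Real.exp (-c)) := by
      rw [Real.sqrt_mul hcpos.le, h2]; ring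
    rw [h1]
    exact Real.sqrt_lt_sqrt (by positivity) hkey
  -- bound f
  have hf1 : f ρ R < 1 / (ρ * Real.sqrt c) := by
    unfold f
    rw [← hxdef]
    have hd2 : 0 < ρ * (Real.exp x * Real.sqrt c) := by
      have : 0 < Real.sqrt c := Real.sqrt_pos.mpr hcpos
      positivity
    have hd1 : ρ * (Real.exp x * Real.sqrt c) < ρ * Real.sqrt (1 - Real.exp (2 * x)) :=
      by exact (mul_lt_mul_iff_right₀ hρ0).mpr hsq
    calc Real.exp x / (ρ * Real.sqrt (1 - Real.exp (2 * x)))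
        < Real.exp x / (ρ * (Real.exp x * Real.sqrt c)) :=
          div_lt_div_of_pos_left (Real.exp_pos x) hd2 hd1
      _ = 1 / (ρ * Real.sqrt c) := by
          rw [div_eq_div_iff (by positivity) (by positivity)]; ring
  have hf2 : 1 / (ρ * Real.sqrt c) < 1 / Real.sqrt (A * B) := by
    have h1 : Real.sqrt (ρ ^ 2 * c) = ρ * Real.sqrt c := by
      rw [Real.sqrt_mul (by positivity : (0:ℝ) ≤ ρ ^ 2), Real.sqrt_sq hρ0.le]
    rw [← h1]
    apply one_div_lt_one_div_of_lt (Real.sqrt_pos.mpr (by positivity))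
    apply Real.sqrt_lt_sqrt (by positivity)
    have := (div_lt_iff₀ (show (0:ℝ) < ρ ^ 2 by positivity)).mp hABc
    linarith
  linarith
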